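/- Let F be a free group and R, S normal subgroups of F. Then the abelian group (R∩S)/(R'∩S') is free abelian. -/

import Mathlib

open Finsupp Submodule

section key
variable {ι : Type} [LinearOrder ι] [WellFoundedLT ι]

theorem free_of_submodule_finsupp (N : Submodule ℤ (ι →₀ ℤ)) : Module.Free ℤ ↥N := by
  classical
  let Mle : ι → Submodule ℤ (ι →₀ ℤ) := fun i =>
    { carrier := {x | ∀ j, i < j → x j = 0}
      add_mem' := fun hx hy j hj => by
        simp only [Finsupp.add_apply, hx j hj, hy j hj, add_zero]
      zero_mem' := fun j hj => rfl
      smul_mem' := fun c x hx j hj => by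
        simp only [Finsupp.smul_apply, hx j hj, smul_zero] }
  let I : ι → Ideal ℤ := fun i => Submodule.map (Finsupp.lapply i) (N ⊓ Mle i)
  let d : ι → ℤ := fun i => Submodule.IsPrincipal.generator (I i)
  have hgen : ∀ i, d i ∈ I i := fun i => Submodule.IsPrincipal.generator_mem _
  have hy' : ∀ i, ∃ x, (x ∈ N ∧ x ∈ Mle i) ∧ x i = d i := by
    intro i
    rcases Submodule.mem_map.mp (hgen i) with ⟨x, hx, hxi⟩
    exact ⟨x, Submodule.mem_inf.mp hx, hxi⟩
  choose y hyN' hyi using hy'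
  have hyN : ∀ i, y i ∈ N := fun i => (hyN' i).1
  have hyMle : ∀ i j, i < j → (y i) j = 0 := fun i => (hyN' i).2
  set s : Set ι := {i : ι | d i ≠ 0} with hs
  set v : s → (ι →₀ ℤ) := fun i => y i with hv
  have hspan : ∀ x ∈ N, x ∈ Submodule.span ℤ (Set.range v) := by
    have main : ∀ m : WithBot ι, ∀ x ∈ N, x.support.max = m →
        x ∈ Submodule.span ℤ (Set.range v) := by
      intro m
      induction m using WellFoundedLT.induction with
      | _ m ih =>
        intro x hxN hm
        rcases eq_or_ne x 0 with rfl | hx0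
        · exact zero_mem _
        · have hne : x.support.Nonempty := Finsupp.support_nonempty_iff.mpr hx0
          obtain ⟨i, hi⟩ := Finset.max_of_nonempty hne
          rw [hm] at hi
          have hmle : x ∈ Mle i := by
            intro j hj
            by_contra h
            have hmem : j ∈ x.support := Finsupp.mem_support_iff.mpr h
            have hle := Finset.le_max hmem
            rw [hm, hi] at hle
            exact absurd (WithBot.coe_le_coe.mp hle) (not_le_of_gt hj)
          have hximem : x i ∈ I i :=
            Submodule.mem_map_of_mem (Submodule.mem_inf.mpr ⟨hxN, hmle⟩)
          have hxi0 : x i ≠ 0 := by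
            have : i ∈ x.support := Finset.mem_of_max (hm ▸ hi)
            exact Finsupp.mem_support_iff.mp this
          rw [← Ideal.span_singleton_generator (I i)] at hximem
          obtain ⟨c, hc⟩ := Ideal.mem_span_singleton'.mp hximem
          have hdi : d i ≠ 0 := fun h => hxi0 (by rw [← hc]; show c * d i = 0; rw [h, mul_zero])
          set x' := x - c • y i with hx'
          have hx'N : x' ∈ N := N.sub_mem hxN (N.smul_mem c (hyN i))
          have hx'coord : ∀ j, i ≤ j → x' j = 0 := by
            intro j hj
            rcases eq_or_lt_of_le hj with heq | hlt
            · subst heq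
              have : x' i = x i - c * (y i) i := by
                simp [hx', Finsupp.sub_apply, Finsupp.smul_apply, smul_eq_mul]
              rw [this, hyi i, hc, sub_self]
            · have h1 : x j = 0 := hmle j hlt
              have h2 : (y i) j = 0 := hyMle i j hlt
              simp [hx', Finsupp.sub_apply, Finsupp.smul_apply, h1, h2]
          have hlt : x'.support.max < m := by
            rw [hi]
            rcases hmax' : x'.support.max with _ | j
            · exact WithBot.bot_lt_coe i
            · have hjmem : j ∈ x'.support := Finset.mem_of_max hmax'
              have hj0 : x' j ≠ 0 := Finsupp.mem_support_iff.mp hjmem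
              have : j < i := by
                by_contra h
                exact hj0 (hx'coord j (le_of_not_gt h))
              exact WithBot.coe_lt_coe.mpr this
          have hx'span := ih _ hlt x' hx'N rfl
          have hxeq : x = x' + c • y i := by rw [hx', sub_add_cancel]
          rw [hxeq]
          exact Submodule.add_mem _ hx'span
            (Submodule.smul_mem _ _ (Submodule.subset_span ⟨⟨i, hdi⟩, rfl⟩))
    exact fun x hx => main x.support.max x hx rfl
  have hli : LinearIndependent ℤ v := by
    rw [linearIndependent_iff]
    intro l hl
    by_contra hl0
    have hne : l.support.Nonempty := Finsupp.support_nonempty_iff.mpr hl0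
    set i := l.support.max' hne with hidef
    have h0 : (Finsupp.linearCombination ℤ v l) (i : ι) = 0 := by rw [hl]; rfl
    rw [Finsupp.linearCombination_apply, Finsupp.sum] at h0
    rw [Finsupp.finset_sum_apply] at h0
    have hsum : ∑ j ∈ l.support, (l j • v j) (i : ι) = l i * d i := by
      rw [Finset.sum_eq_single i]
      · rw [Finsupp.smul_apply, smul_eq_mul]
        congr 1
        exact hyi i
      · intro j hj hji
        have hjlt : (j : ι) < (i : ι) := by
          have := Finset.le_max' l.support j hj
          exact lt_of_le_of_ne this (by simpa [Subtype.ext_iff] using hji)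
        rw [Finsupp.smul_apply]
        rw [show (v j) (i : ι) = 0 from hyMle j (i : ι) hjlt, smul_zero]
      · intro h
        exact absurd (l.support.max'_mem hne) h
    rw [hsum] at h0
    rcases mul_eq_zero.mp h0 with h | h
    · exact Finsupp.mem_support_iff.mp (l.support.max'_mem hne) h
    · exact i.2 h
  let w : s → ↥N := fun i => ⟨y i, hyN i⟩
  have hliw : LinearIndependent ℤ w := LinearIndependent.of_comp N.subtype hli
  have hspw : ⊤ ≤ Submodule.span ℤ (Set.range w) := by
    rintro ⟨x, hx⟩ -
    have hxs := hspan x hx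
    have hrange : Set.range v = N.subtype '' Set.range w := by
      rw [← Set.range_comp]; rfl
    rw [hrange, ← Submodule.map_span] at hxs
    rcases Submodule.mem_map.mp hxs with ⟨z, hz, hzx⟩
    have : z = ⟨x, hx⟩ := Subtype.ext hzx
    rwa [this] at hz
  exact Module.Free.of_basis (Module.Basis.mk hliw hspw)

end key

theorem free_submodule_int {M : Type} [AddCommGroup M] [Module ℤ M] [Module.Free ℤ M]
    (N : Submodule ℤ M) : Module.Free ℤ ↥N := by
  let κ := Module.Free.ChooseBasisIndex ℤ M
  letI : LinearOrder κ := IsWellOrder.linearOrder WellOrderingRel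
  haveI : WellFoundedLT κ := ⟨(inferInstance : IsWellFounded κ WellOrderingRel).wf⟩
  let e : M ≃ₗ[ℤ] (κ →₀ ℤ) := (Module.Free.chooseBasis ℤ M).repr
  have hfree : Module.Free ℤ ↥(N.map (e : M →ₗ[ℤ] (κ →₀ ℤ))) := free_of_submodule_finsupp _
  have h2 : @Module.Free ℤ ↥N _ _ N.module :=
    letI : Module ℤ ↥N := N.module; Module.Free.of_equiv' hfree
      (Submodule.equivMapOfInjective (e : M →ₗ[ℤ] (κ →₀ ℤ)) e.injective N).symm
  have heq : AddCommGroup.toIntModule ↥N = N.module :=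
    @Unique.eq_default _ (AddCommGroup.uniqueIntModule (M := ↥N)) _ |>.trans
      (@Unique.eq_default _ (AddCommGroup.uniqueIntModule (M := ↥N)) _).symm
  rw [heq]
  exact h2

theorem modfree_congr {M : Type} [AddCommGroup M] {i1 i2 : Module ℤ M}
    (h : @Module.Free ℤ M _ _ i1) : @Module.Free ℤ M _ _ i2 := by
  obtain rfl : i1 = i2 :=
    @Subsingleton.elim _ (@Unique.instSubsingleton _ AddCommGroup.uniqueIntModule) _ _
  exact h

def myIntLinearEquiv {M N : Type} [AddCommGroup M] [AddCommGroup N] [Module ℤ M] [Module ℤ N]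
    (e : M ≃+ N) : M ≃ₗ[ℤ] N :=
  e.toLinearEquiv fun c a => by
    have h2 := Int.cast_smul_eq_zsmul ℤ c a
    have h3 := Int.cast_smul_eq_zsmul ℤ c (e a)
    rw [Int.cast_id] at h2 h3
    rw [h2, h3]
    exact map_zsmul e c a

def addProdEquiv {X Y : Type} [CommGroup X] [CommGroup Y] :
    Additive (X × Y) ≃+ Additive X × Additive Y where
  toFun p := (Additive.ofMul p.toMul.1, Additive.ofMul p.toMul.2)
  invFun p := Additive.ofMul (p.1.toMul, p.2.toMul)
  left_inv _ := rfl
  right_inv _ := rfl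
  map_add' _ _ := rfl

noncomputable def abAddEquiv (G : Type) [Group G] [IsFreeGroup G] :
    Additive (Abelianization G) ≃+ FreeAbelianGroup (IsFreeGroup.Generators G) :=
  MulEquiv.toAdditive (MulEquiv.abelianizationCongr (IsFreeGroup.toFreeGroup G))

theorem subgroup_free_abelian {P : Type} [CommGroup P]
    [Module.Free ℤ (Additive P)] (H : Subgroup P) :
    ∃ ι : Type, Nonempty (↥H ≃* Multiplicative (FreeAbelianGroup ι)) := by
  let M : Submodule ℤ (Additive P) := AddSubgroup.toIntSubmodule (Subgroup.toAddSubgroup H)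
  haveI hfM : Module.Free ℤ ↥M := free_submodule_int M
  let ι := Module.Free.ChooseBasisIndex ℤ ↥M
  refine ⟨ι, ⟨?_⟩⟩
  let e1 : ↥H ≃* Multiplicative ↥M :=
    { toFun := fun x => (⟨Additive.ofMul (x : P), x.2⟩ : ↥M)
      invFun := fun x => ⟨Additive.toMul ((Multiplicative.toAdd x : ↥M) : Additive P),
        (Multiplicative.toAdd x).2⟩
      left_inv := fun _ => rfl
      right_inv := fun _ => rfl
      map_mul' := fun _ _ => rfl }
  let b := Module.Free.chooseBasis ℤ ↥M
  let e2 : ↥M ≃+ FreeAbelianGroup ι :=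
    b.repr.toAddEquiv.trans (FreeAbelianGroup.equivFinsupp ι).symm
  exact e1.trans (AddEquiv.toMultiplicative e2)

theorem stmt6 (F : Type) [Group F] [IsFreeGroup F] (R S : Subgroup F)
    [R.Normal] [S.Normal] :
    ∃ ι : Type, Nonempty
      ((↥(R ⊓ S) ⧸ ((⁅R, R⁆ ⊓ ⁅S, S⁆).subgroupOf (R ⊓ S))) ≃*
        Multiplicative (FreeAbelianGroup ι)) := by
  classical
  let f : ↥(R ⊓ S) →* Abelianization ↥R :=
    Abelianization.of.comp (Subgroup.inclusion inf_le_left)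
  let g : ↥(R ⊓ S) →* Abelianization ↥S :=
    Abelianization.of.comp (Subgroup.inclusion inf_le_right)
  let φ := f.prod g
  have hcomm : ∀ (T : Subgroup F) (x : F) (hx : x ∈ T),
      ((⟨x, hx⟩ : ↥T) ∈ commutator ↥T ↔ x ∈ ⁅T, T⁆) := by
    intro T x hx
    have hmap : Subgroup.map T.subtype (commutator ↥T) = ⁅T, T⁆ := by
      rw [commutator_def, Subgroup.map_commutator, ← MonoidHom.range_eq_map,
        Subgroup.range_subtype]
    rw [← hmap]
    exact (Subgroup.mem_map_iff_mem T.subtype_injective).symm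
  have hker : φ.ker = (⁅R, R⁆ ⊓ ⁅S, S⁆).subgroupOf (R ⊓ S) := by
    ext x
    have h1 : f x = 1 ↔ (x : F) ∈ ⁅R, R⁆ :=
      (QuotientGroup.eq_one_iff (Subgroup.inclusion (inf_le_left (b := S)) x)).trans
        (hcomm R x x.2.1)
    have h2 : g x = 1 ↔ (x : F) ∈ ⁅S, S⁆ :=
      (QuotientGroup.eq_one_iff (Subgroup.inclusion (inf_le_right (a := R)) x)).trans
        (hcomm S x x.2.2)
    simp only [MonoidHom.mem_ker, Subgroup.mem_subgroupOf, Subgroup.mem_inf]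
    rw [show φ x = (f x, g x) from rfl, Prod.mk_eq_one]
    exact and_congr h1 h2
  let e0 := (QuotientGroup.quotientMulEquivOfEq hker.symm).trans
    (QuotientGroup.quotientKerEquivRange φ)
  haveI : Module.Free ℤ (Additive (Abelianization ↥R × Abelianization ↥S)) := by
    have e := (addProdEquiv (X := Abelianization ↥R) (Y := Abelianization ↥S)).trans
      (AddEquiv.prodCongr
        ((abAddEquiv ↥R).trans (FreeAbelianGroup.equivFinsupp _))
        ((abAddEquiv ↥S).trans (FreeAbelianGroup.equivFinsupp _)))
    exact modfree_congr (Module.Free.of_equiv (myIntLinearEquiv e).symm)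
  obtain ⟨ι, ⟨e3⟩⟩ := subgroup_free_abelian φ.range
  exact ⟨ι, ⟨e0.trans e3⟩⟩
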